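/- Diagnosis by projection: let s and e be composable labelled transition systems that are mutually accepting, let i_s and i_e be input-enabled transition systems with I_{i_s} = I_s, U_{i_s} = U_s, I_{i_e} = I_e and U_{i_e} = U_e, and let σ ∈ Utraces(s ‖ e). If σ is a counterexample for i_s ‖ i_e uioco s ‖ e, then σ↾L_s^δ is a counterexample for i_s uioco s, or σ↾L_e^δ is a counterexample for i_e uioco e. -/

import Mathlib

/-- Visible labels extended with the quiescence label `δ`. -/
inductive DLabel (A : Type) where
  | act : A → DLabel A
  | δ : DLabel A
deriving DecidableEq

/-- A labelled transition system with state type `S` and label type `A`.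
`T p none p'` is an internal (τ) transition; `T p (some a) p'` a visible one.
The set of states is the whole type `S`; the initial state is `q0`. -/
structure LTS (S : Type) (A : Type) where
  T : S → Option A → S → Prop
  I : Set A
  U : Set A
  q0 : S

namespace LTS

variable {S E F A : Type}

/-- The set of visible labels. -/
def L (s : LTS S A) : Set A := s.I ∪ s.U

/-- Well-formedness of an LTS: countably many states and labels, inputs and
outputs disjoint, and visible transitions labelled in `I ∪ U`. -/
def WF (s : LTS S A) : Prop :=
  Countable S ∧ s.I.Countable ∧ s.U.Countable ∧ Disjoint s.I s.U ∧
    ∀ p a q, s.T p (some a) q → a ∈ s.L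

/-- A state is quiescent if it has no output transitions and no τ-transitions. -/
def quiescent (s : LTS S A) (p : S) : Prop :=
  (∀ x ∈ s.U, ∀ p', ¬ s.T p (some x) p') ∧ (∀ p', ¬ s.T p none p')

/-- Single-step transition relation for δ-extended labels: `δ` is a self-loop
on quiescent states. -/
def dstep (s : LTS S A) (p : S) : DLabel A → S → Prop
  | .act a, p' => s.T p (some a) p'
  | .δ, p' => p = p' ∧ s.quiescent p

/-- `eps p p'`: `p'` is reachable from `p` by finitely many τ-transitions. -/
def eps (s : LTS S A) : S → S → Prop :=
  Relation.ReflTransGen (fun p q => s.T p none q)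

/-- Weak transition relation `p ⟹σ p'` over δ-extended traces. -/
def wtrans (s : LTS S A) : S → List (DLabel A) → S → Prop
  | p, [], p' => s.eps p p'
  | p, ℓ :: σ, p'' => ∃ p1 p2, s.eps p p1 ∧ s.dstep p1 ℓ p2 ∧ s.wtrans p2 σ p''

/-- The δ-extended label set `L^δ` as a set of `DLabel`s. -/
def Ld (s : LTS S A) : Set (DLabel A) := (DLabel.act '' s.L) ∪ {DLabel.δ}

/-- `Utraces s`: δ-extended traces of `s` (from the initial state) that never
pass through a state refusing a subsequent input of the trace. -/
def Utraces (s : LTS S A) : Set (List (DLabel A)) :=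
  { σ | (∀ ℓ ∈ σ, ℓ ∈ s.Ld) ∧ (∃ p, s.wtrans s.q0 σ p) ∧
      ∀ σ1 a σ2, σ = σ1 ++ DLabel.act a :: σ2 → a ∈ s.I →
        ∀ p, s.wtrans s.q0 σ1 p → ∃ p', s.wtrans p [DLabel.act a] p' }

/-- `out p`: the outputs (including quiescence δ) enabled in state `p`. -/
def out (s : LTS S A) (p : S) : Set (DLabel A) :=
  { x | match x with
        | .act a => a ∈ s.U ∧ ∃ p', s.T p (some a) p'
        | .δ => s.quiescent p }

/-- `out` of a set of states. -/
def outSet (s : LTS S A) (P : Set S) : Set (DLabel A) := ⋃ p ∈ P, s.out p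

/-- `inp p`: the inputs weakly enabled in state `p`. -/
def inp (s : LTS S A) (p : S) : Set A :=
  { a | a ∈ s.I ∧ ∃ p', s.wtrans p [DLabel.act a] p' }

/-- The states reached from the initial state after trace `σ`. -/
def after (s : LTS S A) (σ : List (DLabel A)) : Set S :=
  { p' | s.wtrans s.q0 σ p' }

/-- Input-enabledness: every input is weakly enabled in every state. -/
def IOTS (s : LTS S A) : Prop :=
  ∀ q : S, ∀ a ∈ s.I, ∃ q', s.wtrans q [DLabel.act a] q'

/-- Two LTSs are composable iff their output sets are disjoint. -/
def Composable (s : LTS S A) (e : LTS E A) : Prop := Disjoint s.U e.U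

/-- Parallel composition of two LTSs: synchronisation on shared labels,
interleaving on non-shared labels and τ. -/
def par (s : LTS S A) (e : LTS E A) : LTS (S × E) A where
  I := (s.I \ e.U) ∪ (e.I \ s.U)
  U := s.U ∪ e.U
  q0 := (s.q0, e.q0)
  T := fun x ℓ y =>
    (s.T x.1 ℓ y.1 ∧ y.2 = x.2 ∧ (ℓ = none ∨ ∃ a ∈ s.L, ℓ = some a) ∧
      ∀ a ∈ e.L, ℓ ≠ some a) ∨
    (e.T x.2 ℓ y.2 ∧ y.1 = x.1 ∧ (ℓ = none ∨ ∃ a ∈ e.L, ℓ = some a) ∧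
      ∀ a ∈ s.L, ℓ ≠ some a) ∨
    (∃ a ∈ s.L ∩ e.L, ℓ = some a ∧ s.T x.1 (some a) y.1 ∧ e.T x.2 (some a) y.2)

/-- The uioco implementation relation. -/
def uioco (i : LTS E A) (s : LTS S A) : Prop :=
  ∀ σ ∈ s.Utraces, i.outSet (i.after σ) ⊆ s.outSet (s.after σ)

/-- `s.Accepts e`: along every Utrace of `s ‖ e`, every output of `e` that is an
input label of `s` is actually accepted by `s` and is an output of `e`. -/
def Accepts (s : LTS S A) (e : LTS E A) : Prop :=
  ∀ σ ∈ (s.par e).Utraces, ∀ p q, (s.par e).wtrans (s.par e).q0 σ (p, q) →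
    ∀ a, DLabel.act a ∈ e.out q → a ∈ s.I → a ∈ s.inp p ∧ a ∈ e.U

/-- Mutual acceptance. -/
def MutuallyAccepts (s : LTS S A) (e : LTS E A) : Prop := s.Accepts e ∧ e.Accepts s

/-- Isomorphism of LTSs: equal label sets and a bijection on states preserving
the initial state and all transitions (including τ and δ). -/
def Isomorphic (s : LTS S A) (s' : LTS E A) : Prop :=
  s.I = s'.I ∧ s.U = s'.U ∧ ∃ f : S ≃ E, f s.q0 = s'.q0 ∧
    (∀ p p' ℓ, s.T p ℓ p' ↔ s'.T (f p) ℓ (f p')) ∧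
    (∀ p p', s.dstep p DLabel.δ p' ↔ s'.dstep (f p) DLabel.δ (f p'))

open Classical in
/-- Projection of a trace onto a set of labels. -/
noncomputable def proj : List (DLabel A) → Set (DLabel A) → List (DLabel A)
  | [], _ => []
  | ℓ :: σ, 𝓛 => if ℓ ∈ 𝓛 then ℓ :: proj σ 𝓛 else proj σ 𝓛

end LTS

/-- A trace `σ` is a counterexample for `i uioco s`. -/
def LTS.Counterexample {S E A : Type} (σ : List (DLabel A))
    (i : LTS E A) (s : LTS S A) : Prop :=
  σ ∈ s.Utraces ∧ ¬ i.outSet (i.after σ) ⊆ s.outSet (s.after σ)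

namespace LTS

variable {S E A : Type}

/- ### Basic lemmas on `eps` and `wtrans` -/

lemma eps_refl (s : LTS S A) (p : S) : s.eps p p := Relation.ReflTransGen.refl

lemma eps_trans {s : LTS S A} {p q r : S} (h1 : s.eps p q) (h2 : s.eps q r) :
    s.eps p r := Relation.ReflTransGen.trans h1 h2

lemma wtrans_eps_right {s : LTS S A} {σ : List (DLabel A)} {p q r : S}
    (h : s.wtrans p σ q) (h2 : s.eps q r) : s.wtrans p σ r := by
  induction σ generalizing p with
  | nil => exact eps_trans h h2
  | cons ℓ σ ih =>
    obtain ⟨p1, p2, h1, hstep, hrest⟩ := h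
    exact ⟨p1, p2, h1, hstep, ih hrest⟩

lemma wtrans_eps_left {s : LTS S A} {σ : List (DLabel A)} {p q r : S}
    (h1 : s.eps p q) (h : s.wtrans q σ r) : s.wtrans p σ r := by
  cases σ with
  | nil => exact eps_trans h1 h
  | cons ℓ σ =>
    obtain ⟨p1, p2, he, hstep, hrest⟩ := h
    exact ⟨p1, p2, eps_trans h1 he, hstep, hrest⟩

lemma wtrans_append {s : LTS S A} {σ1 σ2 : List (DLabel A)} {p r : S} :
    s.wtrans p (σ1 ++ σ2) r ↔ ∃ q, s.wtrans p σ1 q ∧ s.wtrans q σ2 r := by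
  induction σ1 generalizing p with
  | nil =>
    constructor
    · intro h; exact ⟨p, eps_refl s p, h⟩
    · rintro ⟨q, h1, h2⟩; exact wtrans_eps_left h1 h2
  | cons ℓ σ1 ih =>
    constructor
    · rintro ⟨p1, p2, he, hstep, hrest⟩
      obtain ⟨q, hq1, hq2⟩ := ih.mp hrest
      exact ⟨q, ⟨p1, p2, he, hstep, hq1⟩, hq2⟩
    · rintro ⟨q, ⟨p1, p2, he, hstep, hq1⟩, hq2⟩
      exact ⟨p1, p2, he, hstep, ih.mpr ⟨q, hq1, hq2⟩⟩

lemma eps_eq_of_no_tau {s : LTS S A} {p q : S} (hp : ∀ p', ¬ s.T p none p')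
    (h : s.eps p q) : q = p := by
  rcases Relation.ReflTransGen.cases_head h with h | ⟨c, hc, _⟩
  · exact h.symm
  · exact absurd hc (hp c)

/- ### Label sets -/

lemma act_mem_Ld {s : LTS S A} {a : A} : DLabel.act a ∈ s.Ld ↔ a ∈ s.L := by
  simp [Ld]

lemma δ_mem_Ld (s : LTS S A) : DLabel.δ ∈ s.Ld := by simp [Ld]

lemma par_L (s : LTS S A) (e : LTS E A) : (s.par e).L = s.L ∪ e.L := by
  ext x
  simp only [L, par, Set.mem_union, Set.mem_diff]
  tauto

lemma par_U (s : LTS S A) (e : LTS E A) : (s.par e).U = s.U ∪ e.U := rfl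

lemma par_Ld (s : LTS S A) (e : LTS E A) {ℓ : DLabel A} (h : ℓ ∈ (s.par e).Ld) :
    ℓ = DLabel.δ ∨ ∃ a, ℓ = DLabel.act a ∧ (a ∈ s.L ∨ a ∈ e.L) := by
  rcases h with ⟨a, ha, rfl⟩ | h
  · rw [par_L] at ha
    exact Or.inr ⟨a, rfl, ha⟩
  · simp only [Set.mem_singleton_iff] at h
    exact Or.inl h

/- ### Structure of transitions of a parallel composition -/

lemma par_tau {s : LTS S A} {e : LTS E A} {x y : S × E}
    (h : (s.par e).T x none y) :
    (s.T x.1 none y.1 ∧ y.2 = x.2) ∨ (e.T x.2 none y.2 ∧ y.1 = x.1) := by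
  rcases h with ⟨h1, h2, _, _⟩ | ⟨h1, h2, _, _⟩ | ⟨a, _, h, _⟩
  · exact Or.inl ⟨h1, h2⟩
  · exact Or.inr ⟨h1, h2⟩
  · exact absurd h (by simp)

lemma par_visible {s : LTS S A} {e : LTS E A} {x y : S × E} {a : A}
    (h : (s.par e).T x (some a) y) :
    (a ∈ s.L ∧ a ∉ e.L ∧ s.T x.1 (some a) y.1 ∧ y.2 = x.2) ∨
    (a ∈ e.L ∧ a ∉ s.L ∧ e.T x.2 (some a) y.2 ∧ y.1 = x.1) ∨
    (a ∈ s.L ∧ a ∈ e.L ∧ s.T x.1 (some a) y.1 ∧ e.T x.2 (some a) y.2) := by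
  rcases h with ⟨h1, h2, h3, h4⟩ | ⟨h1, h2, h3, h4⟩ | ⟨b, hb, hba, hs, he⟩
  · rcases h3 with h3 | ⟨b, hb, hba⟩
    · exact absurd h3 (by simp)
    · obtain rfl : b = a := (Option.some.inj hba.symm)
      exact Or.inl ⟨hb, fun hae => h4 _ hae rfl, h1, h2⟩
  · rcases h3 with h3 | ⟨b, hb, hba⟩
    · exact absurd h3 (by simp)
    · obtain rfl : b = a := (Option.some.inj hba.symm)
      exact Or.inr (Or.inl ⟨hb, fun has => h4 _ has rfl, h1, h2⟩)
  · obtain rfl : b = a := (Option.some.inj hba).symm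
    exact Or.inr (Or.inr ⟨hb.1, hb.2, hs, he⟩)

lemma par_T_left {s : LTS S A} {e : LTS E A} {p p' : S} {q : E} {a : A}
    (hs : s.T p (some a) p') (ha : a ∈ s.L) (hae : a ∉ e.L) :
    (s.par e).T (p, q) (some a) (p', q) :=
  Or.inl ⟨hs, rfl, Or.inr ⟨a, ha, rfl⟩, fun b hb h => hae (by injection h with h; exact h ▸ hb)⟩

lemma par_T_right {s : LTS S A} {e : LTS E A} {q q' : E} {p : S} {a : A}
    (hs : e.T q (some a) q') (ha : a ∈ e.L) (hae : a ∉ s.L) :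
    (s.par e).T (p, q) (some a) (p, q') :=
  Or.inr (Or.inl ⟨hs, rfl, Or.inr ⟨a, ha, rfl⟩,
    fun b hb h => hae (by injection h with h; exact h ▸ hb)⟩)

lemma par_T_sync {s : LTS S A} {e : LTS E A} {p p' : S} {q q' : E} {a : A}
    (hs : s.T p (some a) p') (he : e.T q (some a) q') (has : a ∈ s.L) (hae : a ∈ e.L) :
    (s.par e).T (p, q) (some a) (p', q') :=
  Or.inr (Or.inr ⟨a, ⟨has, hae⟩, rfl, hs, he⟩)

lemma par_eps_left {s : LTS S A} {e : LTS E A} {p p' : S} (q : E)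
    (h : s.eps p p') : (s.par e).eps (p, q) (p', q) := by
  induction h with
  | refl => exact eps_refl _ _
  | tail _ hstep ih =>
    exact Relation.ReflTransGen.tail ih
      (Or.inl ⟨hstep, rfl, Or.inl rfl, fun a _ h => by exact absurd h (by simp)⟩)

lemma par_eps_right {s : LTS S A} {e : LTS E A} {q q' : E} (p : S)
    (h : e.eps q q') : (s.par e).eps (p, q) (p, q') := by
  induction h with
  | refl => exact eps_refl _ _
  | tail _ hstep ih =>
    exact Relation.ReflTransGen.tail ih
      (Or.inr (Or.inl ⟨hstep, rfl, Or.inl rfl, fun a _ h => by exact absurd h (by simp)⟩))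

lemma par_eps_proj {s : LTS S A} {e : LTS E A} {x y : S × E}
    (h : (s.par e).eps x y) : s.eps x.1 y.1 ∧ e.eps x.2 y.2 := by
  induction h with
  | refl => exact ⟨eps_refl _ _, eps_refl _ _⟩
  | tail _ hstep ih =>
    rcases par_tau hstep with ⟨h1, h2⟩ | ⟨h1, h2⟩
    · exact ⟨Relation.ReflTransGen.tail ih.1 h1, h2 ▸ ih.2⟩
    · exact ⟨h2 ▸ ih.1, Relation.ReflTransGen.tail ih.2 h1⟩

lemma par_quiescent_of {s : LTS S A} {e : LTS E A} {p : S} {q : E}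
    (hp : s.quiescent p) (hq : e.quiescent q) : (s.par e).quiescent (p, q) := by
  constructor
  · intro x hx y hT
    rcases par_visible hT with ⟨h1, h2, h3, _⟩ | ⟨h1, h2, h3, _⟩ | ⟨h1, h2, h3, h4⟩
    · rcases hx with hx | hx
      · exact hp.1 x hx _ h3
      · exact h2 (Or.inr hx)
    · rcases hx with hx | hx
      · exact h2 (Or.inr hx)
      · exact hq.1 x hx _ h3
    · rcases hx with hx | hx
      · exact hp.1 x hx _ h3
      · exact hq.1 x hx _ h4
  · intro y hT
    rcases par_tau hT with ⟨h1, _⟩ | ⟨h1, _⟩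
    · exact hp.2 _ h1
    · exact hq.2 _ h1

lemma par_quiescent_tau_left {s : LTS S A} {e : LTS E A} {p : S} {q : E}
    (h : (s.par e).quiescent (p, q)) : ∀ p', ¬ s.T p none p' := by
  intro p' hT
  exact h.2 (p', q) (Or.inl ⟨hT, rfl, Or.inl rfl, fun a _ h => by exact absurd h (by simp)⟩)

lemma par_quiescent_tau_right {s : LTS S A} {e : LTS E A} {p : S} {q : E}
    (h : (s.par e).quiescent (p, q)) : ∀ q', ¬ e.T q none q' := by
  intro q' hT
  exact h.1 |> fun _ => h.2 (p, q')
    (Or.inr (Or.inl ⟨hT, rfl, Or.inl rfl, fun a _ h => by exact absurd h (by simp)⟩))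

/- ### Projection lemmas -/

lemma proj_cons_mem {ℓ : DLabel A} {σ : List (DLabel A)} {𝓛 : Set (DLabel A)}
    (h : ℓ ∈ 𝓛) : proj (ℓ :: σ) 𝓛 = ℓ :: proj σ 𝓛 := by
  rw [proj, if_pos h]

lemma proj_cons_not_mem {ℓ : DLabel A} {σ : List (DLabel A)} {𝓛 : Set (DLabel A)}
    (h : ℓ ∉ 𝓛) : proj (ℓ :: σ) 𝓛 = proj σ 𝓛 := by
  rw [proj, if_neg h]

lemma proj_mem {σ : List (DLabel A)} {𝓛 : Set (DLabel A)} {ℓ : DLabel A}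
    (h : ℓ ∈ proj σ 𝓛) : ℓ ∈ 𝓛 ∧ ℓ ∈ σ := by
  induction σ with
  | nil => simp [proj] at h
  | cons ℓ' σ ih =>
    by_cases h' : ℓ' ∈ 𝓛
    · rw [proj_cons_mem h'] at h
      rcases List.mem_cons.mp h with rfl | h
      · exact ⟨h', List.mem_cons_self⟩
      · exact ⟨(ih h).1, List.mem_cons_of_mem _ (ih h).2⟩
    · rw [proj_cons_not_mem h'] at h
      exact ⟨(ih h).1, List.mem_cons_of_mem _ (ih h).2⟩

lemma proj_eq_append {σ σ1 σ2 : List (DLabel A)} {𝓛 : Set (DLabel A)} {ℓ : DLabel A}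
    (h : proj σ 𝓛 = σ1 ++ ℓ :: σ2) :
    ∃ τ1 τ2, σ = τ1 ++ ℓ :: τ2 ∧ proj τ1 𝓛 = σ1 ∧ proj τ2 𝓛 = σ2 := by
  induction σ generalizing σ1 with
  | nil => simp [proj] at h
  | cons ℓ' σ ih =>
    by_cases h' : ℓ' ∈ 𝓛
    · rw [proj_cons_mem h'] at h
      cases σ1 with
      | nil =>
        simp only [List.nil_append, List.cons.injEq] at h
        exact ⟨[], σ, by simp [h.1], by simp [proj], h.2⟩
      | cons a σ1 =>
        simp only [List.cons_append, List.cons.injEq] at h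
        obtain ⟨τ1, τ2, h1, h2, h3⟩ := ih h.2
        exact ⟨ℓ' :: τ1, τ2, by rw [h1]; rfl, by rw [proj_cons_mem h', h2, h.1], h3⟩
    · rw [proj_cons_not_mem h'] at h
      obtain ⟨τ1, τ2, h1, h2, h3⟩ := ih h
      exact ⟨ℓ' :: τ1, τ2, by rw [h1]; rfl, by rw [proj_cons_not_mem h', h2], h3⟩

/- ### Zipping two component runs into a run of the composition -/

lemma zip {s : LTS S A} {e : LTS E A} {σ : List (DLabel A)} {p p' : S} {q q' : E}
    (hlab : ∀ ℓ ∈ σ, ℓ = DLabel.δ ∨ ∃ a, ℓ = DLabel.act a ∧ (a ∈ s.L ∨ a ∈ e.L))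
    (hs : s.wtrans p (proj σ s.Ld) p') (he : e.wtrans q (proj σ e.Ld) q') :
    (s.par e).wtrans (p, q) σ (p', q') := by
  induction σ generalizing p q with
  | nil =>
    simp only [proj] at hs he
    exact eps_trans (par_eps_left q hs) (par_eps_right p' he)
  | cons ℓ σ ih =>
    have hlab' : ∀ ℓ ∈ σ, ℓ = DLabel.δ ∨ ∃ a, ℓ = DLabel.act a ∧ (a ∈ s.L ∨ a ∈ e.L) :=
      fun ℓ h => hlab ℓ (List.mem_cons_of_mem _ h)
    rcases hlab ℓ List.mem_cons_self with rfl | ⟨a, rfl, ha⟩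
    · rw [proj_cons_mem (δ_mem_Ld s)] at hs
      rw [proj_cons_mem (δ_mem_Ld e)] at he
      obtain ⟨p1, p2, hep, hdp, hrp⟩ := hs
      obtain ⟨q1, q2, heq, hdq, hrq⟩ := he
      obtain ⟨rfl, hqp⟩ := hdp
      obtain ⟨rfl, hqq⟩ := hdq
      refine ⟨(p1, q1), (p1, q1),
        eps_trans (par_eps_left q hep) (par_eps_right p1 heq),
        ⟨rfl, par_quiescent_of hqp hqq⟩, ih hlab' hrp hrq⟩
    · by_cases has : a ∈ s.L <;> by_cases hae : a ∈ e.L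
      · rw [proj_cons_mem (act_mem_Ld.mpr has)] at hs
        rw [proj_cons_mem (act_mem_Ld.mpr hae)] at he
        obtain ⟨p1, p2, hep, hdp, hrp⟩ := hs
        obtain ⟨q1, q2, heq, hdq, hrq⟩ := he
        exact ⟨(p1, q1), (p2, q2),
          eps_trans (par_eps_left q hep) (par_eps_right p1 heq),
          par_T_sync hdp hdq has hae, ih hlab' hrp hrq⟩
      · rw [proj_cons_mem (act_mem_Ld.mpr has)] at hs
        rw [proj_cons_not_mem (fun h => hae (act_mem_Ld.mp h))] at he
        obtain ⟨p1, p2, hep, hdp, hrp⟩ := hs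
        exact ⟨(p1, q), (p2, q), par_eps_left q hep,
          par_T_left hdp has hae, ih hlab' hrp he⟩
      · rw [proj_cons_not_mem (fun h => has (act_mem_Ld.mp h))] at hs
        rw [proj_cons_mem (act_mem_Ld.mpr hae)] at he
        obtain ⟨q1, q2, heq, hdq, hrq⟩ := he
        exact ⟨(p, q1), (p, q2), par_eps_right p heq,
          par_T_right hdq hae has, ih hlab' hs hrq⟩
      · rcases ha with ha | ha
        · exact absurd ha has
        · exact absurd ha hae

/- ### Unzipping a run of the composition into component runs -/

lemma unzip {s : LTS S A} {e : LTS E A} {σ : List (DLabel A)} {x z : S × E}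
    (h : (s.par e).wtrans x σ z)
    (H : ∀ σ1 σ2 y, σ = σ1 ++ σ2 → (s.par e).wtrans x σ1 y →
      (s.par e).quiescent y → s.quiescent y.1 ∧ e.quiescent y.2) :
    s.wtrans x.1 (proj σ s.Ld) z.1 ∧ e.wtrans x.2 (proj σ e.Ld) z.2 := by
  induction σ generalizing x with
  | nil =>
    have := par_eps_proj h
    exact ⟨this.1, this.2⟩
  | cons ℓ σ ih =>
    obtain ⟨x1, x2, heps, hstep, hrest⟩ := h
    have heps1 := par_eps_proj heps
    have H' : ∀ σ1 σ2 y, σ = σ1 ++ σ2 → (s.par e).wtrans x2 σ1 y →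
        (s.par e).quiescent y → s.quiescent y.1 ∧ e.quiescent y.2 := by
      intro σ1 σ2 y heq hw hq
      exact H (ℓ :: σ1) σ2 y (by rw [heq]; rfl) ⟨x1, x2, heps, hstep, hw⟩ hq
    have ihr := ih hrest H'
    cases ℓ with
    | δ =>
      obtain ⟨rfl, hq⟩ := hstep
      obtain ⟨hq1, hq2⟩ := H [] (DLabel.δ :: σ) x1 rfl heps hq
      rw [proj_cons_mem (δ_mem_Ld s), proj_cons_mem (δ_mem_Ld e)]
      exact ⟨⟨x1.1, x1.1, heps1.1, ⟨rfl, hq1⟩, ihr.1⟩,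
        ⟨x1.2, x1.2, heps1.2, ⟨rfl, hq2⟩, ihr.2⟩⟩
    | act a =>
      rcases par_visible hstep with ⟨has, hae, hT, hY⟩ | ⟨hae, has, hT, hY⟩ |
          ⟨has, hae, hT1, hT2⟩
      · rw [proj_cons_mem (act_mem_Ld.mpr has),
          proj_cons_not_mem (fun h => hae (act_mem_Ld.mp h))]
        exact ⟨⟨x1.1, x2.1, heps1.1, hT, ihr.1⟩,
          wtrans_eps_left heps1.2 (by rw [hY] at ihr; exact ihr.2)⟩
      · rw [proj_cons_mem (act_mem_Ld.mpr hae),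
          proj_cons_not_mem (fun h => has (act_mem_Ld.mp h))]
        exact ⟨wtrans_eps_left heps1.1 (by rw [hY] at ihr; exact ihr.1),
          ⟨x1.2, x2.2, heps1.2, hT, ihr.2⟩⟩
      · rw [proj_cons_mem (act_mem_Ld.mpr has), proj_cons_mem (act_mem_Ld.mpr hae)]
        exact ⟨⟨x1.1, x2.1, heps1.1, hT1, ihr.1⟩, ⟨x1.2, x2.2, heps1.2, hT2, ihr.2⟩⟩

/- ### Small membership helpers -/

lemma mem_L_of_U {s : LTS S A} {a : A} (h : a ∈ s.U) : a ∈ s.L :=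
  Set.mem_union_right _ h

lemma mem_L_of_I {s : LTS S A} {a : A} (h : a ∈ s.I) : a ∈ s.L :=
  Set.mem_union_left _ h

lemma mem_I_of_L {s : LTS S A} {a : A} (h : a ∈ s.L) (h2 : a ∉ s.U) : a ∈ s.I := by
  rcases h with h | h
  · exact h
  · exact absurd h h2

/- ### Swapping the two components of a parallel composition -/

lemma par_T_swap {s : LTS S A} {e : LTS E A} {x y : S × E} {ℓ : Option A}
    (h : (s.par e).T x ℓ y) : (e.par s).T (x.2, x.1) ℓ (y.2, y.1) := by
  rcases h with ⟨h1, h2, h3, h4⟩ | ⟨h1, h2, h3, h4⟩ | ⟨a, ⟨ha1, ha2⟩, h3, h4, h5⟩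
  · exact Or.inr (Or.inl ⟨h1, h2, h3, h4⟩)
  · exact Or.inl ⟨h1, h2, h3, h4⟩
  · exact Or.inr (Or.inr ⟨a, ⟨ha2, ha1⟩, h3, h5, h4⟩)

lemma par_U_swap (s : LTS S A) (e : LTS E A) : (s.par e).U = (e.par s).U :=
  Set.union_comm _ _

lemma par_I_swap (s : LTS S A) (e : LTS E A) : (s.par e).I = (e.par s).I :=
  Set.union_comm _ _

lemma par_L_swap (s : LTS S A) (e : LTS E A) : (s.par e).L = (e.par s).L := by
  rw [par_L, par_L]; exact Set.union_comm _ _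

lemma par_Ld_swap (s : LTS S A) (e : LTS E A) : (s.par e).Ld = (e.par s).Ld := by
  unfold Ld; rw [par_L_swap]

lemma par_quiescent_swap {s : LTS S A} {e : LTS E A} {x : S × E}
    (h : (s.par e).quiescent x) : (e.par s).quiescent (x.2, x.1) := by
  constructor
  · intro u hu y hT
    exact h.1 u (par_U_swap s e ▸ hu) (y.2, y.1) (par_T_swap hT)
  · intro y hT
    exact h.2 (y.2, y.1) (par_T_swap hT)

lemma par_eps_swap {s : LTS S A} {e : LTS E A} {x y : S × E}
    (h : (s.par e).eps x y) : (e.par s).eps (x.2, x.1) (y.2, y.1) := by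
  induction h with
  | refl => exact eps_refl _ _
  | tail _ hstep ih => exact Relation.ReflTransGen.tail ih (par_T_swap hstep)

lemma par_dstep_swap {s : LTS S A} {e : LTS E A} {x y : S × E} {ℓ : DLabel A}
    (h : (s.par e).dstep x ℓ y) : (e.par s).dstep (x.2, x.1) ℓ (y.2, y.1) := by
  cases ℓ with
  | act a => exact par_T_swap h
  | δ =>
    obtain ⟨rfl, hq⟩ := h
    exact ⟨rfl, par_quiescent_swap hq⟩

lemma par_wtrans_swap {s : LTS S A} {e : LTS E A} {σ : List (DLabel A)} {x y : S × E}
    (h : (s.par e).wtrans x σ y) : (e.par s).wtrans (x.2, x.1) σ (y.2, y.1) := by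
  induction σ generalizing x with
  | nil => exact par_eps_swap h
  | cons ℓ σ ih =>
    obtain ⟨x1, x2, heps, hstep, hrest⟩ := h
    exact ⟨(x1.2, x1.1), (x2.2, x2.1), par_eps_swap heps, par_dstep_swap hstep, ih hrest⟩

lemma par_Utraces_swap {s : LTS S A} {e : LTS E A} {σ : List (DLabel A)}
    (h : σ ∈ (s.par e).Utraces) : σ ∈ (e.par s).Utraces := by
  obtain ⟨h1, ⟨w, hw⟩, h3⟩ := h
  refine ⟨fun ℓ hl => par_Ld_swap s e ▸ h1 ℓ hl, ⟨(w.2, w.1), par_wtrans_swap hw⟩, ?_⟩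
  intro σ1 a σ2 heq ha p hp
  obtain ⟨p', hp'⟩ := h3 σ1 a σ2 heq (par_I_swap e s ▸ ha) (p.2, p.1) (par_wtrans_swap hp)
  exact ⟨(p'.2, p'.1), par_wtrans_swap hp'⟩

/- ### Prefix closure of Utraces -/

lemma Utraces_prefix {s : LTS S A} {σ1 σ2 : List (DLabel A)}
    (h : σ1 ++ σ2 ∈ s.Utraces) : σ1 ∈ s.Utraces := by
  obtain ⟨h1, ⟨w, hw⟩, h3⟩ := h
  refine ⟨fun ℓ hl => h1 ℓ (List.mem_append_left _ hl), ?_, ?_⟩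
  · obtain ⟨q, hq, -⟩ := wtrans_append.mp hw
    exact ⟨q, hq⟩
  · intro τ1 a τ2 heq ha p hp
    exact h3 τ1 a (τ2 ++ σ2) (by rw [heq]; simp) ha p hp

/- ### Quiescence of a composed state transfers to the components -/

lemma quiescent_of_IOTS {s : LTS S A} {e : LTS E A}
    (hd : Disjoint s.U e.U) (hes : s.IOTS) (hee : e.IOTS) {p : S} {q : E}
    (h : (s.par e).quiescent (p, q)) : s.quiescent p ∧ e.quiescent q := by
  have hpt := par_quiescent_tau_left h
  have hqt := par_quiescent_tau_right h
  constructor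
  · refine ⟨?_, hpt⟩
    intro u hu p2 hT
    by_cases hue : u ∈ e.L
    · have hui : u ∈ e.I := mem_I_of_L hue (fun h' => Set.disjoint_left.mp hd hu h')
      obtain ⟨q', q1, q2, heq, hstep, -⟩ := hee q u hui
      obtain rfl : q1 = q := eps_eq_of_no_tau hqt heq
      exact h.1 u (Set.mem_union_left _ hu) (p2, q2)
        (par_T_sync hT hstep (mem_L_of_U hu) hue)
    · exact h.1 u (Set.mem_union_left _ hu) (p2, q)
        (par_T_left hT (mem_L_of_U hu) hue)
  · refine ⟨?_, hqt⟩
    intro u hu q2 hT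
    by_cases hus : u ∈ s.L
    · have hui : u ∈ s.I := mem_I_of_L hus (fun h' => Set.disjoint_right.mp hd hu h')
      obtain ⟨p', p1, p2, hep, hstep, -⟩ := hes p u hui
      obtain rfl : p1 = p := eps_eq_of_no_tau hpt hep
      exact h.1 u (Set.mem_union_right _ hu) (p2, q2)
        (par_T_sync hstep hT hus (mem_L_of_U hu))
    · exact h.1 u (Set.mem_union_right _ hu) (p, q2)
        (par_T_right hT (mem_L_of_U hu) hus)

lemma spec_quiescent {s : LTS S A} {e : LTS E A}
    (hc : Composable s e) (hma : s.MutuallyAccepts e)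
    {σ : List (DLabel A)} (hσ : σ ∈ (s.par e).Utraces) {p : S} {q : E}
    (hw : (s.par e).wtrans (s.par e).q0 σ (p, q))
    (h : (s.par e).quiescent (p, q)) : s.quiescent p ∧ e.quiescent q := by
  have hpt := par_quiescent_tau_left h
  have hqt := par_quiescent_tau_right h
  constructor
  · refine ⟨?_, hpt⟩
    intro u hu p2 hT
    by_cases hue : u ∈ e.L
    · have hui : u ∈ e.I := mem_I_of_L hue (fun h' => Set.disjoint_left.mp hc hu h')
      obtain ⟨⟨-, q', hq'⟩, -⟩ := hma.2 σ (par_Utraces_swap hσ) q p (par_wtrans_swap hw)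
        u (show DLabel.act u ∈ s.out p from ⟨hu, p2, hT⟩) hui
      obtain ⟨q1, q2, heq, hstep, -⟩ := hq'
      obtain rfl : q1 = q := eps_eq_of_no_tau hqt heq
      exact h.1 u (Set.mem_union_left _ hu) (p2, q2)
        (par_T_sync hT hstep (mem_L_of_U hu) hue)
    · exact h.1 u (Set.mem_union_left _ hu) (p2, q)
        (par_T_left hT (mem_L_of_U hu) hue)
  · refine ⟨?_, hqt⟩
    intro u hu q2 hT
    by_cases hus : u ∈ s.L
    · have hui : u ∈ s.I := mem_I_of_L hus (fun h' => Set.disjoint_right.mp hc hu h')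
      obtain ⟨⟨-, p', hp'⟩, -⟩ := hma.1 σ hσ p q hw
        u (show DLabel.act u ∈ e.out q from ⟨hu, q2, hT⟩) hui
      obtain ⟨p1, p2, hep, hstep, -⟩ := hp'
      obtain rfl : p1 = p := eps_eq_of_no_tau hpt hep
      exact h.1 u (Set.mem_union_right _ hu) (p2, q2)
        (par_T_sync hstep hT hus (mem_L_of_U hu))
    · exact h.1 u (Set.mem_union_right _ hu) (p, q2)
        (par_T_right hT (mem_L_of_U hu) hus)

/- ### Projection of a Utrace of the composition is a Utrace of a component -/

lemma proj_Utraces {s : LTS S A} {e : LTS E A}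
    (hc : Composable s e) (hma : s.MutuallyAccepts e)
    {σ : List (DLabel A)} (hσ : σ ∈ (s.par e).Utraces) : proj σ s.Ld ∈ s.Utraces := by
  have H : ∀ σ1 σ2 (y : S × E), σ = σ1 ++ σ2 →
      (s.par e).wtrans (s.par e).q0 σ1 y → (s.par e).quiescent y →
      s.quiescent y.1 ∧ e.quiescent y.2 := by
    intro σ1 σ2 y heq hw hq
    exact spec_quiescent hc hma (Utraces_prefix (heq ▸ hσ)) hw hq
  obtain ⟨h1, ⟨w, hw⟩, h3⟩ := hσ
  have hσ' : σ ∈ (s.par e).Utraces := ⟨h1, ⟨w, hw⟩, h3⟩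
  refine ⟨fun ℓ hl => (proj_mem hl).1, ⟨w.1, (unzip hw H).1⟩, ?_⟩
  intro σ1 a σ2 heq ha p hp
  obtain ⟨τ1, τ2, hστ, hτ1, hτ2⟩ := proj_eq_append heq
  obtain ⟨y, hwy, hwz⟩ := wtrans_append.mp (hστ ▸ hw)
  have Hτ1 : ∀ σ1' σ2' (y' : S × E), τ1 = σ1' ++ σ2' →
      (s.par e).wtrans (s.par e).q0 σ1' y' → (s.par e).quiescent y' →
      s.quiescent y'.1 ∧ e.quiescent y'.2 := by
    intro σ1' σ2' y' heq' hw' hq'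
    exact H σ1' (σ2' ++ DLabel.act a :: τ2) y'
      (by rw [hστ, heq', List.append_assoc]) hw' hq'
  have hey : e.wtrans e.q0 (proj τ1 e.Ld) y.2 := (unzip hwy Hτ1).2
  have hlabτ1 : ∀ ℓ ∈ τ1, ℓ = DLabel.δ ∨ ∃ b, ℓ = DLabel.act b ∧ (b ∈ s.L ∨ b ∈ e.L) := by
    intro ℓ hl
    exact par_Ld s e (h1 ℓ (by rw [hστ]; exact List.mem_append_left _ hl))
  have hzip : (s.par e).wtrans (s.par e).q0 τ1 (p, y.2) :=
    zip hlabτ1 (hτ1 ▸ hp) hey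
  by_cases hUe : a ∈ e.U
  · obtain ⟨y1, y2, hey1, hstep, -⟩ := hwz
    have heT : e.T y1.2 (some a) y2.2 := by
      rcases par_visible hstep with ⟨-, hae, -, -⟩ | ⟨-, -, hT, -⟩ | ⟨-, -, -, hT⟩
      · exact absurd (mem_L_of_U hUe) hae
      · exact hT
      · exact hT
    have hzip2 : (s.par e).wtrans (s.par e).q0 τ1 (p, y1.2) :=
      wtrans_eps_right hzip (par_eps_right p (par_eps_proj hey1).2)
    have hpre : τ1 ∈ (s.par e).Utraces := Utraces_prefix (hστ ▸ hσ')
    obtain ⟨⟨-, p', hp'⟩, -⟩ := hma.1 τ1 hpre p y1.2 hzip2 a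
      (show DLabel.act a ∈ e.out y1.2 from ⟨hUe, y2.2, heT⟩) ha
    exact ⟨p', hp'⟩
  · have haI : a ∈ (s.par e).I := Set.mem_union_left _ ⟨ha, hUe⟩
    obtain ⟨z', hz'⟩ := h3 τ1 a τ2 hστ haI (p, y.2) hzip
    obtain ⟨x1, x2, hex, hstx, -⟩ := hz'
    have hsT : s.T x1.1 (some a) x2.1 := by
      rcases par_visible hstx with ⟨-, -, hT, -⟩ | ⟨-, has, -, -⟩ | ⟨-, -, hT, -⟩
      · exact hT
      · exact absurd (mem_L_of_I ha) has
      · exact hT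
    exact ⟨x2.1, x1.1, x2.1, (par_eps_proj hex).1, hsT, eps_refl _ _⟩

end LTS

/-- diagnosis by projection: a counterexample for the composed
system projects to a counterexample for one of the components. -/
theorem counterexample_proj {S E SI EI A : Type}
    (s : LTS S A) (e : LTS E A) (iS : LTS SI A) (iE : LTS EI A)
    (hs : s.WF) (he : e.WF) (hiswf : iS.WF) (hiewf : iE.WF)
    (hc : LTS.Composable s e) (hma : s.MutuallyAccepts e)
    (his : iS.IOTS) (hie : iE.IOTS)
    (hIs : iS.I = s.I) (hUs : iS.U = s.U) (hIe : iE.I = e.I) (hUe : iE.U = e.U)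
    (σ : List (DLabel A)) (hσ : σ ∈ (s.par e).Utraces)
    (hcex : LTS.Counterexample σ (iS.par iE) (s.par e)) :
    LTS.Counterexample (LTS.proj σ s.Ld) iS s ∨
      LTS.Counterexample (LTS.proj σ e.Ld) iE e := by
  classical
  have hLs : iS.L = s.L := by unfold LTS.L; rw [hIs, hUs]
  have hLe : iE.L = e.L := by unfold LTS.L; rw [hIe, hUe]
  have hLds : iS.Ld = s.Ld := by unfold LTS.Ld; rw [hLs]
  have hLde : iE.Ld = e.Ld := by unfold LTS.Ld; rw [hLe]
  have hdI : Disjoint iS.U iE.U := by rw [hUs, hUe]; exact hc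
  have hmaE : e.MutuallyAccepts s := ⟨hma.2, hma.1⟩
  have hUtS : LTS.proj σ s.Ld ∈ s.Utraces := LTS.proj_Utraces hc hma hσ
  have hUtE : LTS.proj σ e.Ld ∈ e.Utraces :=
    LTS.proj_Utraces hc.symm hmaE (LTS.par_Utraces_swap hσ)
  by_contra hcon
  rw [not_or] at hcon
  obtain ⟨hA, hB⟩ := hcon
  have hsubS : iS.outSet (iS.after (LTS.proj σ s.Ld)) ⊆
      s.outSet (s.after (LTS.proj σ s.Ld)) := by
    by_contra h; exact hA ⟨hUtS, h⟩
  have hsubE : iE.outSet (iE.after (LTS.proj σ e.Ld)) ⊆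
      e.outSet (e.after (LTS.proj σ e.Ld)) := by
    by_contra h; exact hB ⟨hUtE, h⟩
  obtain ⟨-, ⟨pbar, hpbar⟩, -⟩ := hUtS
  obtain ⟨-, ⟨qbar, hqbar⟩, -⟩ := hUtE
  have hlabσ : ∀ ℓ ∈ σ, ℓ = DLabel.δ ∨ ∃ b, ℓ = DLabel.act b ∧ (b ∈ s.L ∨ b ∈ e.L) :=
    fun ℓ hl => LTS.par_Ld s e (hσ.1 ℓ hl)
  apply hcex.2
  intro x hx
  simp only [LTS.outSet, Set.mem_iUnion] at hx ⊢
  obtain ⟨y, hyaft, hyout⟩ := hx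
  have Himpl : ∀ σ1 σ2 (w : SI × EI), σ = σ1 ++ σ2 →
      (iS.par iE).wtrans (iS.par iE).q0 σ1 w → (iS.par iE).quiescent w →
      iS.quiescent w.1 ∧ iE.quiescent w.2 := by
    intro _ _ w _ _ hq
    exact LTS.quiescent_of_IOTS hdI his hie hq
  obtain ⟨hyS, hyE⟩ := LTS.unzip hyaft Himpl
  rw [hLds] at hyS
  rw [hLde] at hyE
  cases x with
  | δ =>
    have hq : (iS.par iE).quiescent y := hyout
    obtain ⟨hq1, hq2⟩ := LTS.quiescent_of_IOTS hdI his hie (p := y.1) (q := y.2) hq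
    have hδS : DLabel.δ ∈ s.outSet (s.after (LTS.proj σ s.Ld)) := by
      apply hsubS
      simp only [LTS.outSet, Set.mem_iUnion]
      exact ⟨y.1, hyS, hq1⟩
    have hδE : DLabel.δ ∈ e.outSet (e.after (LTS.proj σ e.Ld)) := by
      apply hsubE
      simp only [LTS.outSet, Set.mem_iUnion]
      exact ⟨y.2, hyE, hq2⟩
    simp only [LTS.outSet, Set.mem_iUnion] at hδS hδE
    obtain ⟨p', hp'a, hp'q⟩ := hδS
    obtain ⟨q', hq'a, hq'q⟩ := hδE
    refine ⟨(p', q'), LTS.zip hlabσ hp'a hq'a, ?_⟩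
    exact LTS.par_quiescent_of hp'q hq'q
  | act u =>
    obtain ⟨hu, y', hT⟩ := hyout
    have hcase : (u ∈ s.U ∧ ∃ p2, iS.T y.1 (some u) p2) ∨
        (u ∈ e.U ∧ ∃ q2, iE.T y.2 (some u) q2) := by
      rcases LTS.par_visible hT with ⟨h1, h2, h3, -⟩ | ⟨h1, h2, h3, -⟩ | ⟨h1, h2, h3, h4⟩
      · refine Or.inl ⟨?_, y'.1, h3⟩
        rcases hu with hu | hu
        · exact hUs ▸ hu
        · exact absurd (LTS.mem_L_of_U hu) h2
      · refine Or.inr ⟨?_, y'.2, h3⟩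
        rcases hu with hu | hu
        · exact absurd (LTS.mem_L_of_U hu) h2
        · exact hUe ▸ hu
      · rcases hu with hu | hu
        · exact Or.inl ⟨hUs ▸ hu, y'.1, h3⟩
        · exact Or.inr ⟨hUe ▸ hu, y'.2, h4⟩
    rcases hcase with ⟨huS, p2, hTS⟩ | ⟨huE, q2, hTE⟩
    · have hmem : DLabel.act u ∈ s.outSet (s.after (LTS.proj σ s.Ld)) := by
        apply hsubS
        simp only [LTS.outSet, Set.mem_iUnion]
        exact ⟨y.1, hyS, hUs.symm ▸ huS, p2, hTS⟩
      simp only [LTS.outSet, Set.mem_iUnion] at hmem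
      obtain ⟨p', hp'a, hp'o⟩ := hmem
      obtain ⟨hu', p'', hsT⟩ := hp'o
      have hz : (s.par e).wtrans (s.par e).q0 σ (p', qbar) :=
        LTS.zip hlabσ hp'a hqbar
      by_cases hue : u ∈ e.L
      · have hui : u ∈ e.I := LTS.mem_I_of_L hue
          (fun h' => Set.disjoint_left.mp hc hu' h')
        obtain ⟨⟨-, q3, hq3⟩, -⟩ := hma.2 σ (LTS.par_Utraces_swap hσ) qbar p'
          (LTS.par_wtrans_swap hz) u
          (show DLabel.act u ∈ s.out p' from ⟨hu', p'', hsT⟩) hui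
        obtain ⟨q1, q2', heq, hstepE, -⟩ := hq3
        refine ⟨(p', q1), LTS.wtrans_eps_right hz (LTS.par_eps_right p' heq), ?_⟩
        exact ⟨Set.mem_union_left _ hu', (p'', q2'),
          LTS.par_T_sync hsT hstepE (LTS.mem_L_of_U hu') hue⟩
      · exact ⟨(p', qbar), hz, Set.mem_union_left _ hu', (p'', qbar),
          LTS.par_T_left hsT (LTS.mem_L_of_U hu') hue⟩
    · have hmem : DLabel.act u ∈ e.outSet (e.after (LTS.proj σ e.Ld)) := by
        apply hsubE
        simp only [LTS.outSet, Set.mem_iUnion]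
        exact ⟨y.2, hyE, hUe.symm ▸ huE, q2, hTE⟩
      simp only [LTS.outSet, Set.mem_iUnion] at hmem
      obtain ⟨q', hq'a, hq'o⟩ := hmem
      obtain ⟨hu', q'', heT⟩ := hq'o
      have hz : (s.par e).wtrans (s.par e).q0 σ (pbar, q') :=
        LTS.zip hlabσ hpbar hq'a
      by_cases hus : u ∈ s.L
      · have hui : u ∈ s.I := LTS.mem_I_of_L hus
          (fun h' => Set.disjoint_right.mp hc hu' h')
        obtain ⟨⟨-, p3, hp3⟩, -⟩ := hma.1 σ hσ pbar q' hz u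
          (show DLabel.act u ∈ e.out q' from ⟨hu', q'', heT⟩) hui
        obtain ⟨p1, p2', hep, hstepS, -⟩ := hp3
        refine ⟨(p1, q'), LTS.wtrans_eps_right hz (LTS.par_eps_left q' hep), ?_⟩
        exact ⟨Set.mem_union_right _ hu', (p2', q''),
          LTS.par_T_sync hstepS heT hus (LTS.mem_L_of_U hu')⟩
      · exact ⟨(pbar, q'), hz, Set.mem_union_right _ hu', (pbar, q''),
          LTS.par_T_right heT (LTS.mem_L_of_U hu') hus⟩
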